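/- If τc i > 0 for all i and s is a critical point of the direct-ROI loss L (i.e., for every i the function t ↦ L(Function.update s i t) has derivative 0 at s i), then for all indices i, j one has s i < s j if and only if τr i / τc i < τr j / τc j; that is, the scores s rank the ROIs. -/

import Mathlib

/-- The sigmoid function. -/
noncomputable def sigm (t : ℝ) : ℝ := 1 / (1 + Real.exp (-t))

lemma sigm_eq (x : ℝ) : sigm x = Real.exp x / (1 + Real.exp x) := by
  unfold sigm
  rw [Real.exp_neg]
  have h := Real.exp_pos x
  have h1 : (0:ℝ) < 1 + Real.exp x := by positivity
  field_simp
  ring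

lemma one_sub_sigm (x : ℝ) : 1 - sigm x = 1 / (1 + Real.exp x) := by
  rw [sigm_eq]
  have h1 : (0:ℝ) < 1 + Real.exp x := by positivity
  field_simp
  ring

lemma term_eq (a b x : ℝ) :
    a * Real.log (sigm x / (1 - sigm x)) + b * Real.log (1 - sigm x)
      = a * x - b * Real.log (1 + Real.exp x) := by
  have h1 : (0:ℝ) < 1 + Real.exp x := by positivity
  have hratio : sigm x / (1 - sigm x) = Real.exp x := by
    rw [one_sub_sigm, sigm_eq]
    field_simp
  rw [hratio, Real.log_exp, one_sub_sigm, one_div, Real.log_inv]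
  ring

lemma sigm_strictMono : StrictMono sigm := by
  intro x y hxy
  unfold sigm
  have h1 : (0:ℝ) < 1 + Real.exp (-x) := by positivity
  have h2 : (0:ℝ) < 1 + Real.exp (-y) := by positivity
  apply one_div_lt_one_div_of_lt h2
  have := Real.exp_lt_exp.2 (neg_lt_neg hxy)
  linarith

lemma hasDerivAt_inner (a b x : ℝ) :
    HasDerivAt (fun t => a * t - b * Real.log (1 + Real.exp t)) (a - b * sigm x) x := by
  have h1 : (0:ℝ) < 1 + Real.exp x := by positivity
  have hlog : HasDerivAt (fun t : ℝ => Real.log (1 + Real.exp t))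
      (Real.exp x / (1 + Real.exp x)) x :=
    ((Real.hasDerivAt_exp x).const_add 1).log (ne_of_gt h1)
  have h2 : HasDerivAt (fun t : ℝ => a * t) a x := by
    simpa using (hasDerivAt_id x).const_mul a
  have := h2.sub (hlog.const_mul b)
  rw [sigm_eq]
  exact this

/-- at a critical point of the direct-ROI loss, the scores `s`
rank the ROIs `τr i / τc i`. -/
theorem direct_roi_ranks
    (N : ℕ) (hN : 0 < N) (s τr τc : Fin N → ℝ)
    (L : (Fin N → ℝ) → ℝ)
    (hL : L = fun u : Fin N → ℝ => -(1 / (N : ℝ)) *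
      ∑ i, (τr i * Real.log (sigm (u i) / (1 - sigm (u i)))
        + τc i * Real.log (1 - sigm (u i))))
    (hτc : ∀ i, 0 < τc i)
    (hcrit : ∀ i : Fin N, HasDerivAt (fun t : ℝ => L (Function.update s i t)) 0 (s i)) :
    ∀ i j : Fin N, s i < s j ↔ τr i / τc i < τr j / τc j := by
  have key : ∀ i, sigm (s i) = τr i / τc i := by
    intro i
    set C : ℝ := ∑ j ∈ Finset.univ.erase i,
      (τr j * Real.log (sigm (s j) / (1 - sigm (s j))) + τc j * Real.log (1 - sigm (s j)))
    have hfun : (fun t : ℝ => L (Function.update s i t)) =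
        fun t : ℝ => -(1 / (N : ℝ)) * ((τr i * t - τc i * Real.log (1 + Real.exp t)) + C) := by
      funext t
      rw [hL]
      simp only
      rw [← Finset.add_sum_erase _ _ (Finset.mem_univ i), Function.update_self, term_eq]
      congr 2
      exact Finset.sum_congr rfl fun j hj => by
        rw [Function.update_of_ne (Finset.ne_of_mem_erase hj)]
    have hD : HasDerivAt (fun t : ℝ => L (Function.update s i t))
        (-(1 / (N : ℝ)) * (τr i - τc i * sigm (s i))) (s i) := by
      rw [hfun]
      exact (((hasDerivAt_inner (τr i) (τc i) (s i)).add_const C).const_mul _)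
    have h0 := hD.unique (hcrit i)
    have hNne : (N : ℝ) ≠ 0 := Nat.cast_ne_zero.2 hN.ne'
    have : τr i - τc i * sigm (s i) = 0 := by
      have hne : -(1 / (N : ℝ)) ≠ 0 := by
        simp [hNne]
      exact (mul_eq_zero.1 h0).resolve_left hne
    rw [eq_div_iff (hτc i).ne']
    linarith [this]
  intro i j
  rw [← key i, ← key j]
  exact sigm_strictMono.lt_iff_lt.symm
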